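/- Let G be a connected finite simple graph on n ≥ 2 vertices with diameter D. Then EE(G) > e^{(n−1)^{1/D}} + (n − 1) − (n−1)^{1/D}. -/

import Mathlib

open Finset Real

namespace EstradaIndexPaper

/-! ### Auxiliary combinatorial lemmas (walk counting) -/

section WalkCounting

open SimpleGraph

variable {V : Type*} [Fintype V] [DecidableEq V] {G : SimpleGraph V} [DecidableRel G.Adj]

set_option linter.unusedSectionVars false

/-- zigzag closed walk of length `2*k` bouncing on an edge. -/
def zig {a b : V} (h : G.Adj a b) : ℕ → G.Walk a a
  | 0 => .nil
  | k+1 => .cons h (.cons h.symm (zig h k))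

lemma zig_length {a b : V} (h : G.Adj a b) (k : ℕ) : (zig h k).length = 2 * k := by
  induction k with
  | zero => rfl
  | succ k ih => simp [zig, ih]; ring

lemma zig_support {a b : V} (h : G.Adj a b) (k : ℕ) :
    ∀ z ∈ (zig h k).support, z = a ∨ z = b := by
  induction k with
  | zero => intro z hz; simp [zig] at hz; exact Or.inl hz
  | succ k ih =>
    intro z hz
    simp only [zig, Walk.support_cons, List.mem_cons] at hz
    rcases hz with h1 | h1 | h1
    · exact Or.inl h1
    · exact Or.inr h1
    · exact ih z h1

lemma dist_support_le {u v x : V} (hG : G.Connected) (p : G.Walk u v)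
    (hp : p.length = G.dist u v) (hx : x ∈ p.support) :
    G.dist u x ≤ G.dist u v ∧ (G.dist u x = G.dist u v → x = v) := by
  have hts := p.take_spec hx
  have hlen : (p.takeUntil x hx).length + (p.dropUntil x hx).length = G.dist u v := by
    have := congrArg Walk.length hts
    rwa [Walk.length_append, hp] at this
  have h1 : G.dist u x ≤ (p.takeUntil x hx).length := SimpleGraph.dist_le _
  have h2 : G.dist x v ≤ (p.dropUntil x hx).length := SimpleGraph.dist_le _
  have htri : G.dist u v ≤ G.dist u x + G.dist x v := hG.dist_triangle
  constructor
  · omega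
  · intro hEq
    have hzero : G.dist x v = 0 := by omega
    by_contra hne
    have := (SimpleGraph.dist_ne_zero_iff_ne_and_reachable.mpr ⟨hne, hG x v⟩)
    exact this hzero

lemma key_exists {u : V} (hG : G.Connected) (D : ℕ)
    (hDle : ∀ v w : V, G.dist v w ≤ D) (v : V) (hv : v ≠ u) :
    ∃ (z : V) (q : G.Walk u z), q.length = D ∧ v ∈ q.support ∧
      (∀ x ∈ q.support, G.dist u x ≤ G.dist u v) ∧
      (∀ x ∈ q.support, G.dist u x = G.dist u v → x = v) := by
  classical
  set d := G.dist u v with hd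
  have hd0 : d ≠ 0 := by
    rw [hd]
    exact SimpleGraph.dist_ne_zero_iff_ne_and_reachable.mpr ⟨(Ne.symm hv), hG u v⟩
  obtain ⟨p, hp⟩ := hG.exists_walk_length_eq_dist u v
  have hdD : d ≤ D := hDle u v
  have hlt : d - 1 < p.length := by omega
  have hadj' : G.Adj (p.getVert (d-1)) (p.getVert (d-1+1)) := p.adj_getVert_succ hlt
  have hgv : p.getVert (d-1+1) = v := by
    have : d - 1 + 1 = p.length := by omega
    rw [this, Walk.getVert_length]
  rw [hgv] at hadj'
  set w := p.getVert (d-1) with hw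
  have hadj : G.Adj v w := hadj'.symm
  have hwmem : w ∈ p.support := by
    rw [Walk.mem_support_iff_exists_getVert]
    exact ⟨d-1, rfl, by omega⟩
  have hPsupp : ∀ x ∈ p.support, G.dist u x ≤ d ∧ (G.dist u x = d → x = v) := by
    intro x hx; exact dist_support_le hG p hp hx
  rcases Nat.even_or_odd (D - d) with he | ho
  · -- even case
    obtain ⟨k, hk⟩ := he
    set q : G.Walk u v := p.append (zig hadj k) with hq
    have hsupp : ∀ x ∈ q.support, x ∈ p.support := by
      intro x hx
      rw [hq, Walk.mem_support_append_iff] at hx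
      rcases hx with hx | hx
      · exact hx
      · rcases zig_support hadj k x hx with rfl | rfl
        · exact Walk.end_mem_support p
        · exact hwmem
    refine ⟨v, q, ?_, Walk.end_mem_support q, ?_, ?_⟩
    · rw [hq, Walk.length_append, zig_length, hp]; omega
    · intro x hx; exact (hPsupp x (hsupp x hx)).1
    · intro x hx; exact (hPsupp x (hsupp x hx)).2
  · -- odd case
    obtain ⟨k, hk⟩ := ho
    set q : G.Walk u w := (p.append (zig hadj k)).append (Walk.cons hadj Walk.nil) with hq
    have hsupp : ∀ x ∈ q.support, x ∈ p.support := by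
      intro x hx
      rw [hq, Walk.mem_support_append_iff] at hx
      rcases hx with hx | hx
      · rw [Walk.mem_support_append_iff] at hx
        rcases hx with hx | hx
        · exact hx
        · rcases zig_support hadj k x hx with rfl | rfl
          · exact Walk.end_mem_support p
          · exact hwmem
      · simp only [Walk.support_cons, Walk.support_nil, List.mem_cons, List.mem_singleton] at hx
        rcases hx with rfl | hx
        · exact Walk.end_mem_support p
        · simp at hx; subst hx; exact hwmem
    refine ⟨w, q, ?_, ?_, ?_, ?_⟩
    · rw [hq, Walk.length_append, Walk.length_append, zig_length, hp]
      simp only [Walk.length_cons, Walk.length_nil]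
      omega
    · rw [hq, Walk.mem_support_append_iff]
      left
      rw [Walk.mem_support_append_iff]
      left
      exact Walk.end_mem_support p
    · intro x hx; exact (hPsupp x (hsupp x hx)).1
    · intro x hx; exact (hPsupp x (hsupp x hx)).2

lemma support_heq {u a b : V} (h : a = b) {p : G.Walk u a} {q : G.Walk u b}
    (hpq : HEq p q) : p.support = q.support := by
  subst h; rw [heq_iff_eq] at hpq; rw [hpq]

lemma card_walks_ge (hG : G.Connected) (D : ℕ)
    (hDle : ∀ v w : V, G.dist v w ≤ D) (u : V) :
    Fintype.card V - 1 ≤ ∑ v : V, (G.finsetWalkLength D u v).card := by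
  classical
  have key := fun (v : V) (hv : v ≠ u) => key_exists (u := u) hG D hDle v hv
  choose z q hlen hmem hle huniq using key
  set t : Finset ((_ : V) × G.Walk u _) := Finset.univ.sigma (fun z => G.finsetWalkLength D u z)
    with ht
  have hcard : t.card = ∑ v : V, (G.finsetWalkLength D u v).card := Finset.card_sigma _ _
  have hinj : (Finset.univ.erase u).card ≤ t.card := by
    apply Finset.card_le_card_of_injOn
      (fun v => if hv : v ≠ u then ⟨z v hv, q v hv⟩ else ⟨u, Walk.nil⟩)
    · intro v hvmem
      have hv : v ≠ u := Finset.ne_of_mem_erase hvmem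
      simp only [dif_pos hv]
      rw [ht, Finset.mem_coe, Finset.mem_sigma]
      exact ⟨Finset.mem_univ _, (SimpleGraph.mem_finsetWalkLength_iff).mpr (hlen v hv)⟩
    · intro v hvmem v' hvmem' hEq
      have hv : v ≠ u := by simpa using hvmem
      have hv' : v' ≠ u := by simpa using hvmem'
      simp only [dif_pos hv, dif_pos hv'] at hEq
      have hz : z v hv = z v' hv' := congrArg Sigma.fst hEq
      have hq : HEq (q v hv) (q v' hv') := (Sigma.mk.inj_iff.mp hEq).2
      have hsupp_eq : (q v hv).support = (q v' hv').support :=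
        support_heq hz hq
      have hmem' : v' ∈ (q v hv).support := by
        rw [hsupp_eq]; exact hmem v' hv'
      have hmemv : v ∈ (q v' hv').support := by
        rw [← hsupp_eq]; exact hmem v hv
      have h1 : G.dist u v' ≤ G.dist u v := hle v hv v' hmem'
      have h2 : G.dist u v ≤ G.dist u v' := hle v' hv' v hmemv
      have : G.dist u v' = G.dist u v := le_antisymm h1 h2
      exact (huniq v hv v' hmem' this).symm
  rw [hcard] at hinj
  calc Fintype.card V - 1 = (Finset.univ.erase u).card := by
        rw [Finset.card_erase_of_mem (Finset.mem_univ u), Finset.card_univ]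
      _ ≤ _ := hinj

end WalkCounting

/-- The adjacency matrix of a simple graph over `ℝ` is Hermitian. -/
theorem adjMatrix_isHermitian {n : ℕ} (G : SimpleGraph (Fin n)) [DecidableRel G.Adj] :
    (G.adjMatrix ℝ).IsHermitian := by
  unfold Matrix.IsHermitian
  rw [Matrix.conjTranspose_eq_transpose_of_trivial]
  exact G.isSymm_adjMatrix

/-- The eigenvalues of the adjacency matrix of `G`. -/
noncomputable def eig {n : ℕ} (G : SimpleGraph (Fin n)) [DecidableRel G.Adj] : Fin n → ℝ :=
  (adjMatrix_isHermitian G).eigenvalues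

/-- The Estrada index of `G`: the sum of `e^{λ_i}` over the adjacency eigenvalues. -/
noncomputable def EE {n : ℕ} (G : SimpleGraph (Fin n)) [DecidableRel G.Adj] : ℝ :=
  ∑ i, Real.exp (eig G i)

/-- The largest adjacency eigenvalue `λ₁` of `G`. -/
noncomputable def lam1 {n : ℕ} (G : SimpleGraph (Fin n)) [DecidableRel G.Adj] : ℝ :=
  ⨆ i, eig G i

/-- The Randić index `R(G) = Σ_{ij ∈ E(G)} (d(i)d(j))^{-1/2}`. -/
noncomputable def randic {n : ℕ} (G : SimpleGraph (Fin n)) [DecidableRel G.Adj] : ℝ :=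
  ∑ e ∈ G.edgeFinset,
    Sym2.lift ⟨fun i j => (Real.sqrt ((G.degree i : ℝ) * (G.degree j : ℝ)))⁻¹,
      fun i j => by simp [mul_comm]⟩ e

/-- The general Randić index `R_{1/2}(G) = Σ_{ij ∈ E(G)} (d(i)d(j))^{1/2}`. -/
noncomputable def randicHalf {n : ℕ} (G : SimpleGraph (Fin n)) [DecidableRel G.Adj] : ℝ :=
  ∑ e ∈ G.edgeFinset,
    Sym2.lift ⟨fun i j => Real.sqrt ((G.degree i : ℝ) * (G.degree j : ℝ)),
      fun i j => by simp [mul_comm]⟩ e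

/-! ### Auxiliary spectral lemmas -/

section Spectral

open Matrix

variable {n : ℕ} (G : SimpleGraph (Fin n)) [DecidableRel G.Adj]

set_option linter.unusedSectionVars false

/-- abbreviation for the eigenvector basis -/
noncomputable def evb : OrthonormalBasis (Fin n) ℝ (EuclideanSpace ℝ (Fin n)) :=
  (adjMatrix_isHermitian G).eigenvectorBasis

lemma pow_mulVec_evb (k : ℕ) (i : Fin n) :
    (G.adjMatrix ℝ ^ k) *ᵥ ⇑(evb G i) = (eig G i ^ k) • ⇑(evb G i) := by
  induction k with
  | zero => simp [Matrix.one_mulVec]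
  | succ k ih =>
      rw [pow_succ, ← Matrix.mulVec_mulVec]
      rw [show (G.adjMatrix ℝ) *ᵥ ⇑(evb G i) = (eig G i) • ⇑(evb G i) from
        (adjMatrix_isHermitian G).mulVec_eigenvectorBasis i]
      rw [Matrix.mulVec_smul, ih, smul_smul, pow_succ]
      ring_nf

lemma inner_bridge (a b : Fin n → ℝ) :
    (inner ℝ ((WithLp.equiv 2 (Fin n → ℝ)).symm a) ((WithLp.equiv 2 (Fin n → ℝ)).symm b) : ℝ)
      = a ⬝ᵥ b := by
  simp [PiLp.inner_apply, dotProduct, mul_comm]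

lemma quad_form (k : ℕ) (x : Fin n → ℝ) :
    x ⬝ᵥ ((G.adjMatrix ℝ ^ k) *ᵥ x) = ∑ i, eig G i ^ k * (⇑(evb G i) ⬝ᵥ x) ^ 2 := by
  have hxy : x ⬝ᵥ ((G.adjMatrix ℝ ^ k) *ᵥ x)
      = (inner ℝ ((WithLp.equiv 2 (Fin n → ℝ)).symm x)
          ((WithLp.equiv 2 (Fin n → ℝ)).symm ((G.adjMatrix ℝ ^ k) *ᵥ x)) : ℝ) :=
    (inner_bridge _ _).symm
  rw [hxy, ← (evb G).sum_inner_mul_inner]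
  apply Finset.sum_congr rfl
  intro i _
  have h1 : (inner ℝ ((WithLp.equiv 2 (Fin n → ℝ)).symm x) (evb G i) : ℝ)
      = ⇑(evb G i) ⬝ᵥ x := by
    rw [show (evb G i) = (WithLp.equiv 2 (Fin n → ℝ)).symm ⇑(evb G i) from rfl,
      inner_bridge, dotProduct_comm]
    simp
  have h2 : (inner ℝ (evb G i) ((WithLp.equiv 2 (Fin n → ℝ)).symm ((G.adjMatrix ℝ ^ k) *ᵥ x)) : ℝ)
      = eig G i ^ k * (⇑(evb G i) ⬝ᵥ x) := by
    rw [show (evb G i) = (WithLp.equiv 2 (Fin n → ℝ)).symm ⇑(evb G i) from rfl,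
      inner_bridge]
    rw [Matrix.dotProduct_mulVec]
    have hsym : ⇑(evb G i) ᵥ* (G.adjMatrix ℝ ^ k) = (G.adjMatrix ℝ ^ k) *ᵥ ⇑(evb G i) := by
      rw [← Matrix.mulVec_transpose, Matrix.transpose_pow, G.transpose_adjMatrix]
    rw [hsym, pow_mulVec_evb, smul_dotProduct, smul_eq_mul]
    simp
  rw [h1, h2]; ring

lemma parseval (x : Fin n → ℝ) : x ⬝ᵥ x = ∑ i, (⇑(evb G i) ⬝ᵥ x) ^ 2 := by
  have h := quad_form G 0 x
  simpa [Matrix.one_mulVec] using h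

variable [NeZero n]

lemma eig_le_lam1 (i : Fin n) : eig G i ≤ lam1 G :=
  le_ciSup (Set.Finite.bddAbove (Set.finite_range _)) i

lemma rayleigh_le (x : Fin n → ℝ) :
    x ⬝ᵥ ((G.adjMatrix ℝ) *ᵥ x) ≤ lam1 G * (x ⬝ᵥ x) := by
  have h1 := quad_form G 1 x
  simp only [pow_one] at h1
  rw [h1, parseval G x, Finset.mul_sum]
  apply Finset.sum_le_sum
  intro i _
  have := eig_le_lam1 G i
  nlinarith [sq_nonneg (⇑(evb G i) ⬝ᵥ x)]

lemma evb_dot_self (i : Fin n) : ⇑(evb G i) ⬝ᵥ ⇑(evb G i) = 1 := by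
  have h : (inner ℝ (evb G i) (evb G i) : ℝ) = 1 := by
    rw [real_inner_self_eq_norm_sq, (evb G).orthonormal.1 i]; norm_num
  rw [show (evb G i) = (WithLp.equiv 2 (Fin n → ℝ)).symm ⇑(evb G i) from rfl] at h
  rw [inner_bridge] at h
  simpa using h

lemma abs_eig_le_lam1 (j : Fin n) : |eig G j| ≤ lam1 G := by
  set b : Fin n → ℝ := ⇑(evb G j) with hb
  set a : Fin n → ℝ := fun p => |b p| with ha
  have haa : a ⬝ᵥ a = 1 := by
    rw [ha, dotProduct]
    simpa [dotProduct, abs_mul_abs_self] using evb_dot_self G j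
  have hlam : eig G j = b ⬝ᵥ ((G.adjMatrix ℝ) *ᵥ b) := by
    have := pow_mulVec_evb G 1 j
    simp only [pow_one] at this
    rw [hb, this, dotProduct_smul, smul_eq_mul]
    rw [show (⇑(evb G j) ⬝ᵥ ⇑(evb G j)) = 1 from evb_dot_self G j]
    ring
  have habs : |b ⬝ᵥ ((G.adjMatrix ℝ) *ᵥ b)| ≤ a ⬝ᵥ ((G.adjMatrix ℝ) *ᵥ a) := by
    rw [dotProduct, dotProduct]
    calc |∑ p, b p * ((G.adjMatrix ℝ) *ᵥ b) p|
        ≤ ∑ p, |b p * ((G.adjMatrix ℝ) *ᵥ b) p| := Finset.abs_sum_le_sum_abs _ _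
      _ ≤ ∑ p, a p * ((G.adjMatrix ℝ) *ᵥ a) p := by
          apply Finset.sum_le_sum
          intro p _
          rw [abs_mul, Matrix.mulVec, Matrix.mulVec, dotProduct, dotProduct]
          have h2 : |∑ q, (G.adjMatrix ℝ) p q * b q| ≤ ∑ q, (G.adjMatrix ℝ) p q * a q := by
            calc |∑ q, (G.adjMatrix ℝ) p q * b q| ≤ ∑ q, |(G.adjMatrix ℝ) p q * b q| :=
                  Finset.abs_sum_le_sum_abs _ _
              _ = ∑ q, (G.adjMatrix ℝ) p q * a q := by
                  apply Finset.sum_congr rfl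
                  intro q _
                  rw [abs_mul, ha]
                  congr 1
                  simp [SimpleGraph.adjMatrix_apply]
                  split_ifs <;> simp
          have hap : 0 ≤ a p := abs_nonneg _
          calc |b p| * |∑ q, (G.adjMatrix ℝ) p q * b q|
              = a p * |∑ q, (G.adjMatrix ℝ) p q * b q| := by rw [ha]
            _ ≤ a p * ∑ q, (G.adjMatrix ℝ) p q * a q := by
                apply mul_le_mul_of_nonneg_left h2 hap
  have hray := rayleigh_le G a
  rw [haa, mul_one] at hray
  calc |eig G j| = |b ⬝ᵥ ((G.adjMatrix ℝ) *ᵥ b)| := by rw [hlam]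
    _ ≤ a ⬝ᵥ ((G.adjMatrix ℝ) *ᵥ a) := habs
    _ ≤ lam1 G := hray

lemma lam1_nonneg : 0 ≤ lam1 G := by
  have j : Fin n := ⟨0, Nat.pos_of_ne_zero (NeZero.ne n)⟩
  exact le_trans (abs_nonneg _) (abs_eig_le_lam1 G j)

lemma sum_eig_eq_zero : ∑ i, eig G i = 0 := by
  have hA := adjMatrix_isHermitian G
  have hspec := hA.spectral_theorem
  have htr : Matrix.trace (G.adjMatrix ℝ) = ∑ i, eig G i := by
    conv_lhs => rw [hspec]
    rw [Unitary.conjStarAlgAut_apply]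
    rw [Matrix.trace_mul_cycle]
    rw [show (star (hA.eigenvectorUnitary : Matrix (Fin n) (Fin n) ℝ)) *
        (hA.eigenvectorUnitary : Matrix (Fin n) (Fin n) ℝ) = 1 from
      (Matrix.mem_unitaryGroup_iff').mp hA.eigenvectorUnitary.2]
    rw [one_mul, Matrix.trace_diagonal]
    rfl
  rw [← htr, SimpleGraph.trace_adjMatrix]

/-- The key spectral–combinatorial bound: `λ₁^D ≥ n - 1`. -/
lemma lam1_pow_ge (hn : 2 ≤ n) (hG : G.Connected) (D : ℕ)
    (hDle : ∀ v w : Fin n, G.dist v w ≤ D) :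
    (n : ℝ) - 1 ≤ lam1 G ^ D := by
  classical
  set A := G.adjMatrix ℝ with hA
  set ones : Fin n → ℝ := fun _ => 1 with hones
  -- upper bound on the quadratic form
  have hupper : ones ⬝ᵥ ((A ^ D) *ᵥ ones) ≤ lam1 G ^ D * n := by
    rw [quad_form G D ones]
    have hsum : ∑ i, (⇑(evb G i) ⬝ᵥ ones) ^ 2 = (n : ℝ) := by
      rw [← parseval G ones]
      simp [hones, dotProduct]
    calc ∑ i, eig G i ^ D * (⇑(evb G i) ⬝ᵥ ones) ^ 2
        ≤ ∑ i, lam1 G ^ D * (⇑(evb G i) ⬝ᵥ ones) ^ 2 := by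
          apply Finset.sum_le_sum
          intro i _
          have h1 : eig G i ^ D ≤ lam1 G ^ D := by
            calc eig G i ^ D ≤ |eig G i ^ D| := le_abs_self _
              _ = |eig G i| ^ D := by rw [abs_pow]
              _ ≤ lam1 G ^ D := pow_le_pow_left₀ (abs_nonneg _) (abs_eig_le_lam1 G i) D
          nlinarith [sq_nonneg (⇑(evb G i) ⬝ᵥ ones)]
      _ = lam1 G ^ D * (n : ℝ) := by rw [← Finset.mul_sum, hsum]
  -- lower bound via walk counting
  have hlower : (n : ℝ) * ((n : ℝ) - 1) ≤ ones ⬝ᵥ ((A ^ D) *ᵥ ones) := by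
    have hentry : ∀ u : Fin n, ((n : ℝ) - 1) ≤ ∑ v, (A ^ D) u v := by
      intro u
      have hcount := card_walks_ge hG D hDle u
      have hcast : ∑ v, (A ^ D) u v
          = ((∑ v : Fin n, (G.finsetWalkLength D u v).card : ℕ) : ℝ) := by
        push_cast
        apply Finset.sum_congr rfl
        intro v _
        rw [hA, SimpleGraph.adjMatrix_pow_apply_eq_card_walk,
          SimpleGraph.card_set_walk_length_eq]
      rw [hcast]
      have hn1 : ((n : ℝ) - 1) = ((Fintype.card (Fin n) - 1 : ℕ) : ℝ) := by
        rw [Fintype.card_fin]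
        push_cast [Nat.cast_sub (by omega : 1 ≤ n)]
        ring
      rw [hn1]
      exact_mod_cast hcount
    have : ones ⬝ᵥ ((A ^ D) *ᵥ ones) = ∑ u, ∑ v, (A ^ D) u v := by
      simp [dotProduct, Matrix.mulVec, hones]
    rw [this]
    calc (n : ℝ) * ((n : ℝ) - 1) = ∑ _u : Fin n, ((n : ℝ) - 1) := by
          rw [Finset.sum_const, Finset.card_univ, Fintype.card_fin, nsmul_eq_mul]
      _ ≤ ∑ u, ∑ v, (A ^ D) u v := Finset.sum_le_sum (fun u _ => hentry u)
  have hnpos : (0 : ℝ) < n := by positivity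
  nlinarith [hlower, hupper]

end Spectral

lemma exp_sub_mono {a b : ℝ} (ha : 0 ≤ a) (hab : a ≤ b) :
    Real.exp a - a ≤ Real.exp b - b := by
  have h1 : Real.exp b = Real.exp a * Real.exp (b - a) := by
    rw [← Real.exp_add]; ring_nf
  have h2 : (b - a) + 1 ≤ Real.exp (b - a) := Real.add_one_le_exp _
  have h3 : 1 ≤ Real.exp a := Real.one_le_exp ha
  nlinarith [Real.exp_pos a]

theorem stmt4 {n : ℕ} (hn : 2 ≤ n) (G : SimpleGraph (Fin n)) [DecidableRel G.Adj]
    (hG : G.Connected) (D : ℕ) (hD : D = G.diam) :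
    EE G > Real.exp (((n : ℝ) - 1) ^ ((1 : ℝ) / D)) + ((n : ℝ) - 1) -
      ((n : ℝ) - 1) ^ ((1 : ℝ) / D) := by
  classical
  haveI : NeZero n := ⟨by omega⟩
  haveI : Nontrivial (Fin n) :=
    ⟨⟨⟨0, by omega⟩, ⟨1, by omega⟩, by simp [Fin.ext_iff]⟩⟩
  -- the diameter facts
  have hedne : G.ediam ≠ ⊤ := by
    obtain ⟨u, v, huv⟩ := SimpleGraph.exists_edist_eq_ediam_of_finite (G := G)
    rw [← huv]
    exact SimpleGraph.edist_ne_top_iff_reachable.mpr (hG u v)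
  have hDle : ∀ v w : Fin n, G.dist v w ≤ D := by
    intro v w
    rw [hD]
    exact SimpleGraph.dist_le_diam hedne
  have hD1 : 1 ≤ D := by
    by_contra hcon
    have hD0 : D = 0 := by omega
    rw [hD0] at hD
    rcases (SimpleGraph.diam_eq_zero.mp hD.symm) with h | h
    · exact hedne h
    · exact not_subsingleton (Fin n) h
  -- main spectral bound
  have hkey : (n : ℝ) - 1 ≤ lam1 G ^ D := lam1_pow_ge G hn hG D hDle
  have hn1 : (1 : ℝ) ≤ (n : ℝ) - 1 := by
    have : (2 : ℝ) ≤ (n : ℝ) := by exact_mod_cast hn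
    linarith
  have hlam0 : 0 ≤ lam1 G := lam1_nonneg G
  have hlam1 : 1 ≤ lam1 G := by
    by_contra hcon
    push_neg at hcon
    have : lam1 G ^ D < 1 := pow_lt_one₀ hlam0 hcon (by omega)
    linarith
  set x : ℝ := ((n : ℝ) - 1) ^ ((1 : ℝ) / D) with hx
  have hDne : (D : ℝ) ≠ 0 := by
    have : (1 : ℝ) ≤ (D : ℝ) := by exact_mod_cast hD1
    linarith
  have hxle : x ≤ lam1 G := by
    have h1 : x ≤ (lam1 G ^ D) ^ ((1 : ℝ) / D) := by
      apply Real.rpow_le_rpow (by linarith) hkey (by positivity)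
    have h2 : (lam1 G ^ D) ^ ((1 : ℝ) / D) = lam1 G := by
      rw [← Real.rpow_natCast (lam1 G) D, ← Real.rpow_mul hlam0]
      rw [show (D : ℝ) * ((1 : ℝ) / D) = 1 by field_simp]
      exact Real.rpow_one _
    rw [h2] at h1
    exact h1
  have hxnn : 0 ≤ x := Real.rpow_nonneg (by linarith) _
  -- pick the index attaining lam1
  obtain ⟨i0, hi0⟩ := Finite.exists_max (eig G)
  have hl1 : lam1 G = eig G i0 :=
    le_antisymm (ciSup_le hi0) (le_ciSup (Set.Finite.bddAbove (Set.finite_range _)) i0)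
  have hsum0 : ∑ i, eig G i = 0 := sum_eig_eq_zero G
  have herase : ∑ i ∈ Finset.univ.erase i0, eig G i = - lam1 G := by
    have := Finset.sum_erase_add Finset.univ (eig G) (Finset.mem_univ i0)
    rw [hsum0] at this
    rw [hl1]
    linarith
  -- a strictly negative eigenvalue exists among the rest
  have hex : ∃ j ∈ Finset.univ.erase i0, eig G j < 0 := by
    by_contra hcon
    push_neg at hcon
    have : (0 : ℝ) ≤ ∑ i ∈ Finset.univ.erase i0, eig G i :=
      Finset.sum_nonneg hcon
    rw [herase] at this
    linarith
  obtain ⟨j, hjmem, hj⟩ := hex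
  -- strict convexity bound on the rest
  have hstrict : ∑ i ∈ Finset.univ.erase i0, (eig G i + 1)
      < ∑ i ∈ Finset.univ.erase i0, Real.exp (eig G i) := by
    apply Finset.sum_lt_sum
    · intro i _
      have := Real.add_one_le_exp (eig G i)
      linarith
    · refine ⟨j, hjmem, ?_⟩
      have := Real.add_one_lt_exp (x := eig G j) (by linarith)
      linarith
  have hcarde : (Finset.univ.erase i0).card = n - 1 := by
    rw [Finset.card_erase_of_mem (Finset.mem_univ i0), Finset.card_univ, Fintype.card_fin]
  have hsum1 : ∑ i ∈ Finset.univ.erase i0, (eig G i + 1)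
      = - lam1 G + ((n : ℝ) - 1) := by
    rw [Finset.sum_add_distrib, herase, Finset.sum_const, hcarde, nsmul_eq_mul]
    push_cast [Nat.cast_sub (by omega : 1 ≤ n)]
    ring
  have hEE : EE G = Real.exp (eig G i0) + ∑ i ∈ Finset.univ.erase i0, Real.exp (eig G i) := by
    rw [EE, ← Finset.sum_erase_add Finset.univ _ (Finset.mem_univ i0)]
    ring
  have hEEgt : EE G > Real.exp (lam1 G) - lam1 G + ((n : ℝ) - 1) := by
    rw [hEE, hl1]
    have := hstrict
    rw [hsum1] at this
    rw [← hl1]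
    linarith
  have hmono : Real.exp x - x ≤ Real.exp (lam1 G) - lam1 G :=
    exp_sub_mono hxnn hxle
  linarith

end EstradaIndexPaper
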